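/- For every real number t ≥ 10⁷, setting n₁ := ⌊√(t/(2π))⌋, one has |∑_{n=1}^{n₁} n^{-1/2 + it}| ≤ 2 t^{1/4} / (2π)^{1/4} − 1.417. -/

import Mathlib

open Complex Real

lemma sqrt_term_bound (x : ℝ) (hx : 1 ≤ x) :
    (Real.sqrt x)⁻¹ ≤ 2 * Real.sqrt (x + 1/2) - 2 * Real.sqrt (x - 1/2) := by
  have h0 : (0:ℝ) < x := by linarith
  set a := Real.sqrt (x + 1/2) with ha'
  set b := Real.sqrt (x - 1/2) with hb'
  have ha : 0 ≤ a := Real.sqrt_nonneg _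
  have hb : 0 ≤ b := Real.sqrt_nonneg _
  have ha2 : a^2 = x + 1/2 := Real.sq_sqrt (by linarith)
  have hb2 : b^2 = x - 1/2 := Real.sq_sqrt (by linarith)
  have hs : 0 < Real.sqrt x := Real.sqrt_pos.mpr h0
  have hs2 : (Real.sqrt x)^2 = x := Real.sq_sqrt h0.le
  have hab : a * b ≤ x := by
    nlinarith [mul_nonneg ha hb]
  have hsum : a + b ≤ 2 * Real.sqrt x := by
    nlinarith [sq_nonneg (a + b)]
  have hba : b ≤ a := by nlinarith
  have hkey : 1 ≤ (2*a - 2*b) * Real.sqrt x := by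
    nlinarith
  have hinv : Real.sqrt x * (Real.sqrt x)⁻¹ = 1 := mul_inv_cancel₀ hs.ne'
  have hinv0 : 0 ≤ (Real.sqrt x)⁻¹ := by positivity
  nlinarith

lemma sum_sqrt_inv_le (N : ℕ) (hN : 1 ≤ N) :
    ∑ n ∈ Finset.Icc 1 N, (Real.sqrt n)⁻¹ ≤
      1 + 2 * Real.sqrt ((N:ℝ) + 1/2) - 2 * Real.sqrt (3/2) := by
  induction N, hN using Nat.le_induction with
  | base =>
    rw [Finset.Icc_self, Finset.sum_singleton]
    push_cast
    rw [Real.sqrt_one, show (1:ℝ)+1/2 = 3/2 by norm_num]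
    norm_num
  | succ N hN ih =>
    rw [Finset.sum_Icc_succ_top (by omega)]
    have hN1 : (1:ℝ) ≤ (N:ℝ) + 1 := by
      have : (1:ℝ) ≤ (N:ℝ) := by exact_mod_cast hN
      linarith
    have h := sqrt_term_bound ((N:ℝ)+1) hN1
    have e1 : ((N:ℝ)+1) - 1/2 = (N:ℝ) + 1/2 := by ring
    rw [e1] at h
    push_cast
    linarith

theorem main_sum_bound (t : ℝ) (ht : 10^7 ≤ t)
    (n₁ : ℕ) (hn₁ : n₁ = ⌊Real.sqrt (t / (2 * Real.pi))⌋₊) :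
    ‖∑ n ∈ Finset.Icc 1 n₁, (n : ℂ) ^ ((-1/2 : ℂ) + t * Complex.I)‖ ≤
      2 * t ^ ((1:ℝ)/4) / (2 * Real.pi) ^ ((1:ℝ)/4) - 1.417 := by
  have hπ : 0 < Real.pi := Real.pi_pos
  have ht0 : (0:ℝ) < t := by norm_num at ht ⊢; linarith
  set x := Real.sqrt (t / (2 * Real.pi)) with hxdef
  have hx0 : 0 ≤ x := Real.sqrt_nonneg _
  -- x ≥ 1261
  have hx1261 : (1261:ℝ) ≤ x := by
    rw [hxdef, show (1261:ℝ) = Real.sqrt (1261^2) by rw [Real.sqrt_sq]; norm_num]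
    apply Real.sqrt_le_sqrt
    rw [le_div_iff₀ (by positivity)]
    nlinarith [Real.pi_lt_d6]
  have hn1261 : 1261 ≤ n₁ := by
    rw [hn₁]; exact Nat.le_floor (by exact_mod_cast hx1261)
  have hn1 : 1 ≤ n₁ := by omega
  have hnx : (n₁ : ℝ) ≤ x := by
    rw [hn₁]; exact Nat.floor_le hx0
  -- step 1: bound abs of sum by sum of 1/sqrt n
  have hterm : ∀ n ∈ Finset.Icc 1 n₁,
      ‖(n : ℂ) ^ ((-1/2 : ℂ) + t * Complex.I)‖ = (Real.sqrt n)⁻¹ := by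
    intro n hn
    rw [Finset.mem_Icc] at hn
    have hn0 : (0:ℝ) < n := by exact_mod_cast hn.1
    rw [show ((n:ℂ)) = (((n:ℝ)):ℂ) by push_cast; ring,
      Complex.norm_cpow_eq_rpow_re_of_pos hn0]
    have hre : ((-1/2 : ℂ) + t * Complex.I).re = -(1/2) := by simp; norm_num
    rw [hre, Real.rpow_neg hn0.le, Real.sqrt_eq_rpow]
  have habs : ‖∑ n ∈ Finset.Icc 1 n₁, (n : ℂ) ^ ((-1/2 : ℂ) + t * Complex.I)‖
      ≤ ∑ n ∈ Finset.Icc 1 n₁, (Real.sqrt n)⁻¹ := by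
    calc ‖∑ n ∈ Finset.Icc 1 n₁, (n : ℂ) ^ ((-1/2 : ℂ) + t * Complex.I)‖
        ≤ ∑ n ∈ Finset.Icc 1 n₁, ‖(n : ℂ) ^ ((-1/2 : ℂ) + t * Complex.I)‖ :=
          norm_sum_le _ _
      _ = ∑ n ∈ Finset.Icc 1 n₁, (Real.sqrt n)⁻¹ := Finset.sum_congr rfl hterm
  have hsum := sum_sqrt_inv_le n₁ hn1
  -- sqrt n₁ ≥ 35
  have hs35 : (35:ℝ) ≤ Real.sqrt n₁ := by
    rw [show (35:ℝ) = Real.sqrt (35^2) by rw [Real.sqrt_sq]; norm_num]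
    apply Real.sqrt_le_sqrt
    have : (1225:ℝ) ≤ (n₁:ℝ) := by exact_mod_cast (by omega : 1225 ≤ n₁)
    linarith
  -- sqrt(n₁ + 1/2) ≤ sqrt n₁ + 1/140
  have hsq : Real.sqrt ((n₁:ℝ) + 1/2) ≤ Real.sqrt n₁ + 1/140 := by
    have hu2 : (Real.sqrt n₁)^2 = (n₁:ℝ) := Real.sq_sqrt (by positivity)
    have h1 : ((n₁:ℝ) + 1/2) ≤ (Real.sqrt n₁ + 1/140)^2 := by nlinarith
    calc Real.sqrt ((n₁:ℝ) + 1/2) ≤ Real.sqrt ((Real.sqrt n₁ + 1/140)^2) :=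
          Real.sqrt_le_sqrt h1
      _ = Real.sqrt n₁ + 1/140 := Real.sqrt_sq (by linarith)
  -- sqrt(3/2) ≥ 1.2247
  have hs32 : (1.2247:ℝ) ≤ Real.sqrt (3/2) := by
    rw [show (1.2247:ℝ) = Real.sqrt (1.2247^2) by rw [Real.sqrt_sq]; norm_num]
    apply Real.sqrt_le_sqrt; norm_num
  -- 2 sqrt n₁ ≤ RHS main term
  have hfin : 2 * Real.sqrt n₁ ≤ 2 * t ^ ((1:ℝ)/4) / (2 * Real.pi) ^ ((1:ℝ)/4) := by
    have h1 : Real.sqrt (n₁:ℝ) ≤ Real.sqrt x := Real.sqrt_le_sqrt hnx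
    have h2 : Real.sqrt x = (t / (2 * Real.pi)) ^ ((1:ℝ)/4) := by
      rw [hxdef, Real.sqrt_eq_rpow, Real.sqrt_eq_rpow,
        ← Real.rpow_mul (by positivity)]
      norm_num
    have h3 : (t / (2 * Real.pi)) ^ ((1:ℝ)/4) = t ^ ((1:ℝ)/4) / (2 * Real.pi) ^ ((1:ℝ)/4) :=
      Real.div_rpow ht0.le (by positivity) _
    rw [h2, h3] at h1
    rw [mul_div_assoc]
    linarith
  calc ‖∑ n ∈ Finset.Icc 1 n₁, (n : ℂ) ^ ((-1/2 : ℂ) + t * Complex.I)‖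
      ≤ ∑ n ∈ Finset.Icc 1 n₁, (Real.sqrt n)⁻¹ := habs
    _ ≤ 1 + 2 * Real.sqrt ((n₁:ℝ) + 1/2) - 2 * Real.sqrt (3/2) := hsum
    _ ≤ 2 * t ^ ((1:ℝ)/4) / (2 * Real.pi) ^ ((1:ℝ)/4) - 1.417 := by
        have : (1.417:ℝ) ≤ 2 * (1.2247) - 1 - 2/140 := by norm_num
        linarith
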